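/- If a graph G admits an H-factorization, then for every positive integer k the graph G[k] admits an H[k]-factorization. In particular, if G has a decomposition into spanning subgraphs each isomorphic to a spanning subgraph H, then G[k] has a decomposition into spanning subgraphs each isomorphic to H[k]. -/

import Mathlib

open SimpleGraph

/-- `F` is a decomposition of the graph `G` into edge-disjoint subgraphs. -/
def IsDecompositionF {V : Type*} {n : ℕ} (G : SimpleGraph V) (F : Fin n → SimpleGraph V) : Prop :=
  (∀ i, F i ≤ G) ∧ (∀ i j, i ≠ j → F i ⊓ F j = ⊥) ∧ (⨆ i, F i) = G

/-- `H` is a `C_k`-factor of `G`: a spanning 2-regular subgraph all of whose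
connected components have `k` vertices (hence are `k`-cycles). -/
def IsCnFactor {V : Type*} (G H : SimpleGraph V) (k : ℕ) : Prop :=
  H ≤ G ∧ (∀ v, (H.neighborSet v).ncard = 2) ∧
    ∀ v, (H.connectedComponentMk v).supp.ncard = k

/-- `H` is a perfect matching (1-factor) of `G`. -/
def IsPM {V : Type*} (G H : SimpleGraph V) : Prop :=
  H ≤ G ∧ ∀ v, (H.neighborSet v).ncard = 1

/-- The lexicographic blow-up `C_m[4]`: the Cayley graph on `ZMod 4 × ZMod m`
with connection set `ZMod 4 × {1, -1}`. -/
def Cm4 (m : ℕ) : SimpleGraph (ZMod 4 × ZMod m) :=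
  SimpleGraph.fromRel (fun u v => v.2 - u.2 = 1)

/-- The blow-up `G[k]`: replace every vertex by `k` independent vertices. -/
def blowup {V : Type*} (G : SimpleGraph V) (k : ℕ) : SimpleGraph (V × Fin k) where
  Adj u v := G.Adj u.1 v.1
  symm := ⟨fun _ _ h => G.adj_symm h⟩
  loopless := ⟨fun u h => G.irrefl (v := u.1) h⟩

/-- If `G` has an `H`-factorization, then `G[k]` has an `H[k]`-factorization. -/
theorem stmt_9 {V : Type*} (G H : SimpleGraph V) (k : ℕ) (hk : 0 < k)
    (n : ℕ) (F : Fin n → SimpleGraph V)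
    (hF : IsDecompositionF G F) (hiso : ∀ i, Nonempty (F i ≃g H)) :
    ∃ F' : Fin n → SimpleGraph (V × Fin k),
      IsDecompositionF (blowup G k) F' ∧ ∀ i, Nonempty (F' i ≃g blowup H k) := by
  obtain ⟨hle, hdisj, hsup⟩ := hF
  refine ⟨fun i => blowup (F i) k, ⟨fun i u v h => hle i h, fun i j hij => ?_, ?_⟩,
    fun i => (hiso i).map fun e =>
      ⟨Equiv.prodCongr e.toEquiv (Equiv.refl (Fin k)), fun {u v} => e.map_adj_iff⟩⟩
  · ext u v
    simp only [SimpleGraph.inf_adj, SimpleGraph.bot_adj, iff_false]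
    rintro ⟨h1, h2⟩
    have : (F i ⊓ F j).Adj u.1 v.1 := ⟨h1, h2⟩
    rw [hdisj i j hij] at this
    exact this
  · ext u v
    simp only [SimpleGraph.iSup_adj]
    change (∃ i, (F i).Adj u.1 v.1) ↔ G.Adj u.1 v.1
    rw [← SimpleGraph.iSup_adj, hsup]
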